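/- Let 0 < ξ₀ < ξ₁, 0 < η_e < η₁, and 0 < η₀ < η₁. Set s := √( ξ₀²ξ₁²η₁² / (ξ₁²η₀² + ξ₀²η₁² − ξ₀²η₀²) ), s₂ := (ξ₀/η₀)·η_e, and u := ξ₀²η_e²η₁² / ( ξ₁²(η₁² − η_e²) + ξ₀²η_e² ). If η₀² < u, then s < s₂. -/

import Mathlib

/-- Claim 5: if `η₀² < u` then `s < s₂`. -/
theorem stmt7 (ξ₀ ξ₁ ηe η₀ η₁ s s₂ u : ℝ)
    (hξ₀ : 0 < ξ₀) (hξ : ξ₀ < ξ₁) (hηe₀ : 0 < ηe) (hηe : ηe < η₁)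
    (hη₀ : 0 < η₀) (hη : η₀ < η₁)
    (hs : s = Real.sqrt (ξ₀ ^ 2 * ξ₁ ^ 2 * η₁ ^ 2 /
      (ξ₁ ^ 2 * η₀ ^ 2 + ξ₀ ^ 2 * η₁ ^ 2 - ξ₀ ^ 2 * η₀ ^ 2)))
    (hs₂ : s₂ = (ξ₀ / η₀) * ηe)
    (hu : u = ξ₀ ^ 2 * ηe ^ 2 * η₁ ^ 2 /
      (ξ₁ ^ 2 * (η₁ ^ 2 - ηe ^ 2) + ξ₀ ^ 2 * ηe ^ 2))
    (hη₀u : η₀ ^ 2 < u) :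
    s < s₂ := by
  have hξ₁ : 0 < ξ₁ := hξ₀.trans hξ
  have h1 : 0 < η₁ ^ 2 - ηe ^ 2 := by nlinarith
  have h2 : 0 < η₁ ^ 2 - η₀ ^ 2 := by nlinarith
  have hE : 0 < ξ₁ ^ 2 * (η₁ ^ 2 - ηe ^ 2) + ξ₀ ^ 2 * ηe ^ 2 := by positivity
  have hD : 0 < ξ₁ ^ 2 * η₀ ^ 2 + ξ₀ ^ 2 * η₁ ^ 2 - ξ₀ ^ 2 * η₀ ^ 2 := by nlinarith [mul_pos (pow_pos hξ₀ 2) h2, mul_pos (pow_pos hξ₁ 2) (pow_pos hη₀ 2)]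
  rw [hu, lt_div_iff₀ hE] at hη₀u
  have hs₂pos : 0 < s₂ := by
    rw [hs₂]; positivity
  rw [hs]
  rw [Real.sqrt_lt' hs₂pos, hs₂, div_lt_iff₀ hD]
  have hη₀' : η₀ ≠ 0 := ne_of_gt hη₀
  field_simp
  nlinarith [mul_lt_mul_of_pos_left hη₀u (pow_pos hξ₀ 2)]
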